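/- For $\omega \in \mathbb{C}$ with $\Im\,\omega > 0$, the roots of $z^2 - (6-\omega^2)z + 1 = 0$ (the zeros of $R(z) = Q(z) + 2$ multiplied by $z$) come in a reciprocal pair $z_r, 1/z_r$ with $|z_r| < 1$, i.e. neither root lies on the unit circle. -/

import Mathlib

/-- For `ω : ℂ` with `Im ω > 0`, the roots of `z² - (6 - ω²)z + 1 = 0` come in a
reciprocal pair `z_r, z_r⁻¹` with `|z_r| < 1`; in particular no root lies on the
unit circle. -/
theorem stmt1 (ω : ℂ) (hω : 0 < ω.im) :
    ∃ zr : ℂ, zr ≠ 0 ∧ zr * zr⁻¹ = 1 ∧ ‖zr‖ < 1 ∧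
      (∀ z : ℂ, z ^ 2 - (6 - ω ^ 2) * z + 1 = (z - zr) * (z - zr⁻¹)) ∧
      ∀ z : ℂ, z ^ 2 - (6 - ω ^ 2) * z + 1 = 0 → ‖z‖ ≠ 1 := by
  set b : ℂ := 6 - ω ^ 2 with hb
  -- no root on the unit circle
  have key : ∀ z : ℂ, z ^ 2 - b * z + 1 = 0 → ‖z‖ ≠ 1 := by
    intro z hz habs
    have hz0 : z ≠ 0 := by
      intro h; rw [h] at hz; simp at hz
    have hconj : z * (starRingEnd ℂ) z = 1 := by
      rw [Complex.mul_conj]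
      norm_cast
      rw [Complex.normSq_eq_norm_sq, habs]; norm_num
    have hbz : b = z + (starRingEnd ℂ) z := by
      have h1 : z * (z + (starRingEnd ℂ) z) = z * b := by
        linear_combination hz + hconj
      exact (mul_left_cancel₀ hz0 h1).symm
    have him : b.im = 0 := by rw [hbz]; simp
    have him2 : ω.re * ω.im = 0 := by
      have : b.im = -(2 * ω.re * ω.im) := by
        rw [hb]; simp [Complex.sub_im, pow_two, Complex.mul_im]; ring
      rw [him] at this; linarith [this]
    have hre0 : ω.re = 0 := by
      rcases mul_eq_zero.mp him2 with h | h
      · exact h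
      · exact absurd h (ne_of_gt hω)
    have hbre : b.re = 6 + ω.im ^ 2 := by
      rw [hb]; simp [Complex.sub_re, pow_two, Complex.mul_re, hre0]
    have hzre : b.re = 2 * z.re := by rw [hbz]; simp; ring
    have hle : |z.re| ≤ 1 := by
      calc |z.re| ≤ ‖z‖ := Complex.abs_re_le_norm z
        _ = 1 := habs
    have : 6 + ω.im ^ 2 ≤ 2 := by
      rw [← hbre, hzre]
      have := abs_le.mp hle
      linarith [this.2]
    nlinarith [sq_nonneg ω.im]
  -- existence of a root
  obtain ⟨z1, hz1⟩ : ∃ z : ℂ, z ^ 2 - b * z + 1 = 0 := by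
    obtain ⟨d, hd⟩ := IsAlgClosed.exists_eq_mul_self (b ^ 2 - 4)
    exact ⟨(b + d) / 2, by linear_combination -hd / 4⟩
  have hz10 : z1 ≠ 0 := by intro h; rw [h] at hz1; simp at hz1
  have hsum : z1 + z1⁻¹ = b := by
    field_simp
    linear_combination hz1
  have hfac : ∀ z : ℂ, z ^ 2 - b * z + 1 = (z - z1) * (z - z1⁻¹) := by
    intro z
    have hinv : z1 * z1⁻¹ = 1 := mul_inv_cancel₀ hz10
    calc z ^ 2 - b * z + 1 = z ^ 2 - (z1 + z1⁻¹) * z + z1 * z1⁻¹ := by rw [hsum, hinv]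
      _ = (z - z1) * (z - z1⁻¹) := by ring
  have habs1 : ‖z1‖ ≠ 1 := key z1 hz1
  have habsinv : ‖z1⁻¹‖ = ‖z1‖⁻¹ := norm_inv _
  have hpos : 0 < ‖z1‖ := by
    simpa using norm_pos_iff.mpr hz10
  rcases lt_or_gt_of_ne habs1 with h | h
  · exact ⟨z1, hz10, mul_inv_cancel₀ hz10, h, hfac, key⟩
  · refine ⟨z1⁻¹, inv_ne_zero hz10, ?_, ?_, ?_, key⟩
    · rw [inv_inv]; exact inv_mul_cancel₀ hz10
    · rw [habsinv]; exact inv_lt_one_of_one_lt₀ h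
    · intro z; rw [inv_inv, hfac z]; ring
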